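/- Let summands and hypotheses be as in the main asymptotic law, but define the upper-bracket counting function N'(E) = Σ_{k=1}^∞ #{(l,m) ∈ ℤ² : l ≥ 0, m ≥ 1, π²l²/f(k)² + π²m²/b_k² ≤ E} (Neumann conditions on the artificial vertical boundaries). Then there is a constant C > 0 such that for all E ≥ 1, |N'(E) − ((1/(4π))·V(E)·E − (1/(4π))·L(E)·√E + G(E))| ≤ C·√E, where V(E) = Σ_{k=1}^{n(E)} f(k)·b_k, L(E) = Σ_{k=1}^{n(E)} 2(f(k)+b_k), G(E) = Σ_{k=1}^{n(E)} (1/4)(P_k(√E/π) − (f(k)b_k/π)E), P_k(R) = #{(l,m) ∈ ℤ² : l²/f(k)² + m²/b_k² ≤ R²}, and n(E) = max{k : b_k ≥ π/√E}. -/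

import Mathlib

open Real Filter

/-- The mixed Dirichlet–Neumann counting function of the rectangle with side
lengths `a` and `b` (Neumann on the two vertical sides): the number of integer
pairs `(l, m)` with `l ≥ 0`, `m ≥ 1` and `π²l²/a² + π²m²/b² ≤ E`. -/
noncomputable def mixedCount (a b E : ℝ) : ℕ :=
  Set.ncard {p : ℤ × ℤ | 0 ≤ p.1 ∧ 1 ≤ p.2 ∧
    Real.pi ^ 2 * (p.1 : ℝ) ^ 2 / a ^ 2 + Real.pi ^ 2 * (p.2 : ℝ) ^ 2 / b ^ 2 ≤ E}

/-- `P_k(R)`: the number of integer lattice points `(l, m)` with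
`l²/a² + m²/b² ≤ R²`. -/
noncomputable def fullEllipseCount (a b R : ℝ) : ℕ :=
  Set.ncard {p : ℤ × ℤ |
    (p.1 : ℝ) ^ 2 / a ^ 2 + (p.2 : ℝ) ^ 2 / b ^ 2 ≤ R ^ 2}

/-- The number of rectangles thick enough to support eigenvalues of size at
most `E` (sequences are `0`-indexed; for `b` antitone this is
`max{k : b_k ≥ π/√E}` in `1`-indexed notation). -/
noncomputable def coreIndex (b : ℕ → ℝ) (E : ℝ) : ℕ :=
  Set.ncard {k : ℕ | Real.pi / Real.sqrt E ≤ b k}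

open scoped Classical

/-- Core counting identity: 4-fold unfolding of the ellipse count. -/
lemma weyl_card_key (a b R : ℝ) (ha : 0 < a) (hb : 0 < b) (hR : 0 ≤ R) :
    (Set.ncard {p : ℤ × ℤ |
        (p.1 : ℝ) ^ 2 / a ^ 2 + (p.2 : ℝ) ^ 2 / b ^ 2 ≤ R ^ 2} : ℤ)
      + 2 * ⌊b * R⌋
    = 4 * (Set.ncard {p : ℤ × ℤ | 0 ≤ p.1 ∧ 1 ≤ p.2 ∧
        (p.1 : ℝ) ^ 2 / a ^ 2 + (p.2 : ℝ) ^ 2 / b ^ 2 ≤ R ^ 2} : ℤ)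
      + 2 * ⌊a * R⌋ + 1 := by
  have hna : 0 ≤ ⌊a * R⌋ := Int.floor_nonneg.mpr (by positivity)
  have hnb : 0 ≤ ⌊b * R⌋ := Int.floor_nonneg.mpr (by positivity)
  -- one-dimensional membership criterion
  have hmem : ∀ (t : ℝ), 0 < t → ∀ l : ℤ,
      ((l : ℝ) ^ 2 / t ^ 2 ≤ R ^ 2 ↔ -⌊t * R⌋ ≤ l ∧ l ≤ ⌊t * R⌋) := by
    intro t ht l
    have h1 : ((l : ℝ) ^ 2 / t ^ 2 ≤ R ^ 2) ↔ ((l : ℝ) ^ 2 ≤ (t * R) ^ 2) := by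
      rw [div_le_iff₀ (by positivity)]
      constructor <;> intro h <;> nlinarith
    rw [h1, sq_le_sq, abs_of_nonneg (by positivity : (0:ℝ) ≤ t * R), abs_le]
    constructor
    · rintro ⟨h2, h3⟩
      refine ⟨?_, Int.le_floor.mpr h3⟩
      have : (-l : ℤ) ≤ ⌊t * R⌋ := Int.le_floor.mpr (by push_cast; linarith)
      omega
    · rintro ⟨h2, h3⟩
      have h3' : (l : ℝ) ≤ t * R := le_trans (Int.cast_le.mpr h3) (Int.floor_le _)
      have h2' : ((-l : ℤ) : ℝ) ≤ t * R :=
        le_trans (Int.cast_le.mpr (by omega)) (Int.floor_le _)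
      push_cast at h2'
      exact ⟨by linarith, h3'⟩
  set cond : ℤ × ℤ → Prop := fun p =>
    (p.1 : ℝ) ^ 2 / a ^ 2 + (p.2 : ℝ) ^ 2 / b ^ 2 ≤ R ^ 2 with hcond_def
  have hcond1 : ∀ p : ℤ × ℤ, cond p → -⌊a * R⌋ ≤ p.1 ∧ p.1 ≤ ⌊a * R⌋ := by
    intro p hp
    refine (hmem a ha p.1).mp ?_
    have h2 : 0 ≤ (p.2 : ℝ) ^ 2 / b ^ 2 := by positivity
    simp only [hcond_def] at hp
    linarith
  have hcond2 : ∀ p : ℤ × ℤ, cond p → -⌊b * R⌋ ≤ p.2 ∧ p.2 ≤ ⌊b * R⌋ := by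
    intro p hp
    refine (hmem b hb p.2).mp ?_
    have h2 : 0 ≤ (p.1 : ℝ) ^ 2 / a ^ 2 := by positivity
    simp only [hcond_def] at hp
    linarith
  obtain ⟨F, hmemF⟩ : ∃ F : Finset (ℤ × ℤ), ∀ p : ℤ × ℤ, p ∈ F ↔ cond p := by
    refine ⟨(Finset.Icc (-⌊a * R⌋) ⌊a * R⌋ ×ˢ
      Finset.Icc (-⌊b * R⌋) ⌊b * R⌋).filter cond, fun p => ?_⟩
    rw [Finset.mem_filter]
    constructor
    · exact fun h => h.2
    · intro h
      refine ⟨Finset.mem_product.mpr ⟨Finset.mem_Icc.mpr (hcond1 p h),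
        Finset.mem_Icc.mpr (hcond2 p h)⟩, h⟩
  -- set identifications
  have hfullset : {p : ℤ × ℤ |
      (p.1 : ℝ) ^ 2 / a ^ 2 + (p.2 : ℝ) ^ 2 / b ^ 2 ≤ R ^ 2} = ↑F := by
    ext p
    simp only [Set.mem_setOf_eq, Finset.mem_coe]
    exact (hmemF p).symm
  have hmixset : {p : ℤ × ℤ | 0 ≤ p.1 ∧ 1 ≤ p.2 ∧
      (p.1 : ℝ) ^ 2 / a ^ 2 + (p.2 : ℝ) ^ 2 / b ^ 2 ≤ R ^ 2}
      = ↑(F.filter (fun p => 0 ≤ p.1 ∧ 1 ≤ p.2)) := by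
    ext p
    simp only [Set.mem_setOf_eq, Finset.mem_coe, Finset.mem_filter]
    constructor
    · rintro ⟨h1, h2, h3⟩
      exact ⟨(hmemF p).mpr h3, h1, h2⟩
    · rintro ⟨h1, h2, h3⟩
      exact ⟨h2, h3, (hmemF p).mp h1⟩
  -- negation symmetries of F
  have hFneg : ∀ p : ℤ × ℤ, p ∈ F → ((-p.1, -p.2) : ℤ × ℤ) ∈ F := by
    intro p hp
    rw [hmemF] at hp ⊢
    simpa only [hcond_def, Int.cast_neg, neg_sq] using hp
  have hFneg1 : ∀ p : ℤ × ℤ, p ∈ F → ((-p.1, p.2) : ℤ × ℤ) ∈ F := by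
    intro p hp
    rw [hmemF] at hp ⊢
    simpa only [hcond_def, Int.cast_neg, neg_sq] using hp
  rw [hfullset, hmixset, Set.ncard_coe_finset, Set.ncard_coe_finset]
  clear hfullset hmixset
  have e1 : F.card = (F.filter (fun p => p.2 = 0)).card
      + (F.filter (fun p => 1 ≤ p.2)).card
      + (F.filter (fun p => p.2 ≤ -1)).card := by
    have hd1 : Disjoint (F.filter (fun p => p.2 = 0)) (F.filter (fun p => 1 ≤ p.2)) := by
      rw [Finset.disjoint_left]
      intro p hp hq
      rw [Finset.mem_filter] at hp hq
      omega
    have hd2 : Disjoint (F.filter (fun p => p.2 = 0) ∪ F.filter (fun p => 1 ≤ p.2))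
        (F.filter (fun p => p.2 ≤ -1)) := by
      rw [Finset.disjoint_left]
      intro p hp hq
      rw [Finset.mem_union, Finset.mem_filter, Finset.mem_filter] at hp
      rw [Finset.mem_filter] at hq
      omega
    rw [← Finset.card_union_of_disjoint hd1, ← Finset.card_union_of_disjoint hd2]
    congr 1
    ext p
    simp only [Finset.mem_union, Finset.mem_filter]
    constructor
    · intro h
      have h' : p.2 = 0 ∨ 1 ≤ p.2 ∨ p.2 ≤ -1 := by omega
      tauto
    · rintro ((⟨h, _⟩ | ⟨h, _⟩) | ⟨h, _⟩) <;> exact h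
  have e2 : (F.filter (fun p => p.2 ≤ -1)).card = (F.filter (fun p => 1 ≤ p.2)).card := by
    apply Finset.card_bij' (fun p _ => ((-p.1, -p.2) : ℤ × ℤ))
      (fun p _ => ((-p.1, -p.2) : ℤ × ℤ))
    · intro p hp
      rw [Finset.mem_filter] at hp ⊢
      exact ⟨hFneg p hp.1, by omega⟩
    · intro p hp
      rw [Finset.mem_filter] at hp ⊢
      exact ⟨hFneg p hp.1, by omega⟩
    · intro p _; simp
    · intro p _; simp
  have e3 : (F.filter (fun p => 1 ≤ p.2)).card
      = (F.filter (fun p => 0 ≤ p.1 ∧ 1 ≤ p.2)).card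
      + (F.filter (fun p => p.1 ≤ -1 ∧ 1 ≤ p.2)).card := by
    have hd : Disjoint (F.filter (fun p => 0 ≤ p.1 ∧ 1 ≤ p.2))
        (F.filter (fun p => p.1 ≤ -1 ∧ 1 ≤ p.2)) := by
      rw [Finset.disjoint_left]
      intro p hp hq
      rw [Finset.mem_filter] at hp hq
      omega
    rw [← Finset.card_union_of_disjoint hd]
    congr 1
    ext p
    simp only [Finset.mem_union, Finset.mem_filter]
    constructor
    · rintro ⟨h1, h2⟩
      have h' : 0 ≤ p.1 ∨ p.1 ≤ -1 := by omega
      tauto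
    · rintro (⟨h, h'⟩ | ⟨h, h'⟩) <;> exact ⟨h, h'.2⟩
  have e4 : (F.filter (fun p => p.1 ≤ -1 ∧ 1 ≤ p.2)).card
      = (F.filter (fun p => 1 ≤ p.1 ∧ 1 ≤ p.2)).card := by
    apply Finset.card_bij' (fun p _ => ((-p.1, p.2) : ℤ × ℤ))
      (fun p _ => ((-p.1, p.2) : ℤ × ℤ))
    · intro p hp
      rw [Finset.mem_filter] at hp ⊢
      exact ⟨hFneg1 p hp.1, by omega, hp.2.2⟩
    · intro p hp
      rw [Finset.mem_filter] at hp ⊢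
      exact ⟨hFneg1 p hp.1, by omega, hp.2.2⟩
    · intro p _; simp
    · intro p _; simp
  have e5 : (F.filter (fun p => 0 ≤ p.1 ∧ 1 ≤ p.2)).card
      = (F.filter (fun p => p.1 = 0 ∧ 1 ≤ p.2)).card
      + (F.filter (fun p => 1 ≤ p.1 ∧ 1 ≤ p.2)).card := by
    have hd : Disjoint (F.filter (fun p => p.1 = 0 ∧ 1 ≤ p.2))
        (F.filter (fun p => 1 ≤ p.1 ∧ 1 ≤ p.2)) := by
      rw [Finset.disjoint_left]
      intro p hp hq
      rw [Finset.mem_filter] at hp hq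
      omega
    rw [← Finset.card_union_of_disjoint hd]
    congr 1
    ext p
    simp only [Finset.mem_union, Finset.mem_filter]
    constructor
    · rintro ⟨h1, h2, h3⟩
      have h' : p.1 = 0 ∨ 1 ≤ p.1 := by omega
      tauto
    · rintro (⟨h, h'⟩ | ⟨h, h'⟩) <;> exact ⟨h, by omega, h'.2⟩
  have e6 : (F.filter (fun p => p.1 = 0 ∧ 1 ≤ p.2)).card = (⌊b * R⌋).toNat := by
    have himg : F.filter (fun p => p.1 = 0 ∧ 1 ≤ p.2)
        = (Finset.Icc (1 : ℤ) ⌊b * R⌋).image (fun m => ((0 : ℤ), m)) := by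
      ext p
      simp only [Finset.mem_filter, Finset.mem_image, Finset.mem_Icc]
      constructor
      · rintro ⟨hpF, hp1, hp2⟩
        refine ⟨p.2, ⟨hp2, (hcond2 p ((hmemF p).mp hpF)).2⟩, ?_⟩
        ext <;> simp [hp1]
      · rintro ⟨m, ⟨hm1, hm2⟩, rfl⟩
        refine ⟨?_, rfl, hm1⟩
        rw [hmemF]
        have hmR : (m : ℝ) ^ 2 / b ^ 2 ≤ R ^ 2 :=
          (hmem b hb m).mpr ⟨by omega, hm2⟩
        show ((0 : ℤ) : ℝ) ^ 2 / a ^ 2 + (m : ℝ) ^ 2 / b ^ 2 ≤ R ^ 2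
        simpa using hmR
    rw [himg, Finset.card_image_of_injective _ (by intro x y h; simpa using h),
      Int.card_Icc]
    omega
  have e7 : (F.filter (fun p => p.2 = 0)).card = (2 * ⌊a * R⌋ + 1).toNat := by
    have himg : F.filter (fun p => p.2 = 0)
        = (Finset.Icc (-⌊a * R⌋) ⌊a * R⌋).image (fun l => (l, (0 : ℤ))) := by
      ext p
      simp only [Finset.mem_filter, Finset.mem_image, Finset.mem_Icc]
      constructor
      · rintro ⟨hpF, hp2⟩
        refine ⟨p.1, hcond1 p ((hmemF p).mp hpF), ?_⟩
        ext <;> simp [hp2]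
      · rintro ⟨l, ⟨hl1, hl2⟩, rfl⟩
        refine ⟨?_, rfl⟩
        rw [hmemF]
        have hlR : (l : ℝ) ^ 2 / a ^ 2 ≤ R ^ 2 := (hmem a ha l).mpr ⟨hl1, hl2⟩
        show (l : ℝ) ^ 2 / a ^ 2 + ((0 : ℤ) : ℝ) ^ 2 / b ^ 2 ≤ R ^ 2
        simpa using hlR
    rw [himg, Finset.card_image_of_injective _ (by intro x y h; simpa using h),
      Int.card_Icc]
    omega
  omega

/-- `mixedCount` in terms of the full ellipse count. -/
lemma mixedCount_eq_quarter (a b E : ℝ) (ha : 0 < a) (hb : 0 < b) (hE : 0 ≤ E) :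
    (mixedCount a b E : ℝ) =
      (fullEllipseCount a b (Real.sqrt E / Real.pi) : ℝ) / 4
      + (⌊b * (Real.sqrt E / Real.pi)⌋ : ℝ) / 2
      - (⌊a * (Real.sqrt E / Real.pi)⌋ : ℝ) / 2 - 1 / 4 := by
  set R := Real.sqrt E / Real.pi with hR_def
  have hR : 0 ≤ R := by positivity
  have hpi : (0 : ℝ) < Real.pi := Real.pi_pos
  have hE' : E = Real.pi ^ 2 * R ^ 2 := by
    rw [hR_def, div_pow, Real.sq_sqrt hE]
    field_simp
  have hiff : ∀ p : ℤ × ℤ,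
      (Real.pi ^ 2 * (p.1 : ℝ) ^ 2 / a ^ 2 + Real.pi ^ 2 * (p.2 : ℝ) ^ 2 / b ^ 2 ≤ E)
      ↔ ((p.1 : ℝ) ^ 2 / a ^ 2 + (p.2 : ℝ) ^ 2 / b ^ 2 ≤ R ^ 2) := by
    intro p
    rw [hE']
    have heq : Real.pi ^ 2 * (p.1 : ℝ) ^ 2 / a ^ 2 + Real.pi ^ 2 * (p.2 : ℝ) ^ 2 / b ^ 2
        = Real.pi ^ 2 * ((p.1 : ℝ) ^ 2 / a ^ 2 + (p.2 : ℝ) ^ 2 / b ^ 2) := by ring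
    rw [heq, mul_le_mul_iff_right₀ (by positivity)]
  have hset : mixedCount a b E = Set.ncard {p : ℤ × ℤ | 0 ≤ p.1 ∧ 1 ≤ p.2 ∧
      (p.1 : ℝ) ^ 2 / a ^ 2 + (p.2 : ℝ) ^ 2 / b ^ 2 ≤ R ^ 2} := by
    unfold mixedCount
    congr 1
    ext p
    simp only [Set.mem_setOf_eq, hiff p]
  have hkey : (fullEllipseCount a b R : ℤ) + 2 * ⌊b * R⌋
      = 4 * (mixedCount a b E : ℤ) + 2 * ⌊a * R⌋ + 1 := by
    rw [hset]
    exact weyl_card_key a b R ha hb hR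
  have hkeyR : (fullEllipseCount a b R : ℝ) + 2 * (⌊b * R⌋ : ℝ)
      = 4 * (mixedCount a b E : ℝ) + 2 * (⌊a * R⌋ : ℝ) + 1 := by
    exact_mod_cast hkey
  linarith

/-- `mixedCount` vanishes on thin rectangles. -/
lemma mixedCount_eq_zero (a b E : ℝ) (hb : 0 < b) (hE : 0 < E)
    (h : b < Real.pi / Real.sqrt E) : mixedCount a b E = 0 := by
  have hsE : 0 < Real.sqrt E := Real.sqrt_pos.mpr hE
  have hbE : b * Real.sqrt E < Real.pi := by
    rw [lt_div_iff₀ hsE] at h; exact h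
  have hlt : E < Real.pi ^ 2 / b ^ 2 := by
    rw [lt_div_iff₀ (by positivity)]
    have h1 : b * Real.sqrt E < Real.pi := hbE
    have h2 : (b * Real.sqrt E) ^ 2 < Real.pi ^ 2 := by
      apply sq_lt_sq' _ h1
      have : 0 < b * Real.sqrt E := by positivity
      linarith [Real.pi_pos]
    calc E * b ^ 2 = (b * Real.sqrt E) ^ 2 := by
          rw [mul_pow, Real.sq_sqrt hE.le]; ring
      _ < Real.pi ^ 2 := h2
  unfold mixedCount
  convert Set.ncard_empty (ℤ × ℤ)
  rw [Set.eq_empty_iff_forall_notMem]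
  rintro p ⟨hp1, hp2, hp3⟩
  have hm : (1 : ℝ) ≤ (p.2 : ℝ) ^ 2 := by
    have : (1 : ℝ) ≤ (p.2 : ℝ) := by exact_mod_cast hp2
    nlinarith
  have h1 : Real.pi ^ 2 / b ^ 2 ≤ Real.pi ^ 2 * (p.2 : ℝ) ^ 2 / b ^ 2 := by
    gcongr
    nlinarith [Real.pi_pos]
  have h2 : (0 : ℝ) ≤ Real.pi ^ 2 * (p.1 : ℝ) ^ 2 / a ^ 2 := by positivity
  linarith

/-- A finite downward-closed subset of `ℕ` is an initial segment. -/
lemma downward_closed_eq_Iio (K : Set ℕ) (hfin : K.Finite)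
    (hdc : ∀ {m n : ℕ}, m ≤ n → n ∈ K → m ∈ K) : K = Set.Iio K.ncard := by
  ext k
  simp only [Set.mem_Iio]
  constructor
  · intro hk
    have hsub : Set.Iic k ⊆ K := fun j hj => hdc hj hk
    have h1 : (Set.Iic k).ncard ≤ K.ncard := Set.ncard_le_ncard hsub hfin
    have h2 : (Set.Iic k).ncard = k + 1 := by
      rw [← Finset.coe_Iic, Set.ncard_coe_finset, Nat.card_Iic]
    omega
  · intro hk
    by_contra hkK
    have hsub : K ⊆ Set.Iio k := by
      intro j hj
      simp only [Set.mem_Iio]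
      by_contra hjk
      exact hkK (hdc (by omega) hj)
    have h1 : K.ncard ≤ (Set.Iio k).ncard := Set.ncard_le_ncard hsub (Set.finite_Iio k)
    have h2 : (Set.Iio k).ncard = k := by
      rw [← Finset.coe_Iio, Set.ncard_coe_finset, Nat.card_Iio]
    omega

/-- Main asymptotic law for simple domains, upper bracket: the summed mixed
Dirichlet–Neumann lattice count (Neumann on the artificial vertical
boundaries) equals `(1/(4π))·V(E)·E − (1/(4π))·L(E)·√E + G(E)` up to an error
`O(√E)`, where `V`, `L`, `G` are the core volume, summed perimeter and summed
area error of the spectral core. -/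
theorem simple_domain_weyl_law_upper (f b : ℕ → ℝ) (c : ℝ) (hc : 0 < c)
    (hf : ∀ k, c ≤ f k) (hb : ∀ k, 0 < b k) (hmono : Antitone b)
    (hlim : Tendsto b atTop (nhds 0)) (hsum : Summable b) :
    ∃ C > (0 : ℝ), ∀ E : ℝ, 1 ≤ E →
      |(∑' k, (mixedCount (f k) (b k) E : ℝ)) -
        ((1 / (4 * Real.pi)) *
            (∑ k ∈ Finset.range (coreIndex b E), f k * b k) * E -
          (1 / (4 * Real.pi)) *
            (∑ k ∈ Finset.range (coreIndex b E), 2 * (f k + b k)) *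
              Real.sqrt E +
          ∑ k ∈ Finset.range (coreIndex b E),
            (1 / 4) * ((fullEllipseCount (f k) (b k)
                (Real.sqrt E / Real.pi) : ℝ) -
              (f k * b k / Real.pi) * E))| ≤ C * Real.sqrt E := by
  have hpi : (0 : ℝ) < Real.pi := Real.pi_pos
  set S := ∑' k, b k with hS_def
  have hS : 0 ≤ S := tsum_nonneg fun k => (hb k).le
  refine ⟨2 * S / Real.pi + 1, by positivity, ?_⟩
  intro E hE
  have hE0 : (0 : ℝ) < E := lt_of_lt_of_le one_pos hE
  have hsE : 1 ≤ Real.sqrt E := Real.one_le_sqrt.mpr hE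
  have hsE0 : 0 < Real.sqrt E := by linarith
  set R := Real.sqrt E / Real.pi with hR_def
  have hR : 0 < R := div_pos hsE0 hpi
  -- the core set
  set K := {k : ℕ | Real.pi / Real.sqrt E ≤ b k} with hK_def
  have hKfin : K.Finite := by
    have hpos : 0 < Real.pi / Real.sqrt E := by positivity
    have hev : ∀ᶠ k in atTop, b k < Real.pi / Real.sqrt E :=
      hlim.eventually (eventually_lt_nhds hpos)
    obtain ⟨N, hN⟩ := eventually_atTop.mp hev
    apply (Set.finite_Iio N).subset
    intro k hk
    simp only [Set.mem_Iio]
    by_contra hkN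
    exact absurd (hN k (by omega)) (not_lt.mpr hk)
  have hKdc : ∀ {m n : ℕ}, m ≤ n → n ∈ K → m ∈ K := by
    intro m n hmn hn
    exact le_trans hn (hmono hmn)
  have hKI : K = Set.Iio (coreIndex b E) := by
    have := downward_closed_eq_Iio K hKfin hKdc
    rwa [show K.ncard = coreIndex b E from rfl] at this
  set n := coreIndex b E with hn_def
  -- the tsum reduces to a finite sum
  have hzero : ∀ k ∉ Finset.range n, (mixedCount (f k) (b k) E : ℝ) = 0 := by
    intro k hk
    have hknotK : k ∉ K := by
      rw [hKI]
      simpa [Set.mem_Iio] using fun h => hk (Finset.mem_range.mpr h)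
    have hbk : b k < Real.pi / Real.sqrt E := not_le.mp hknotK
    rw [mixedCount_eq_zero (f k) (b k) E (hb k) hE0 hbk]
    norm_num
  have htsum : (∑' k, (mixedCount (f k) (b k) E : ℝ))
      = ∑ k ∈ Finset.range n, (mixedCount (f k) (b k) E : ℝ) :=
    tsum_eq_sum hzero
  -- per-term target
  set t : ℕ → ℝ := fun k =>
    (1 / (4 * Real.pi)) * (f k * b k) * E
      - (1 / (4 * Real.pi)) * (2 * (f k + b k)) * Real.sqrt E
      + (1 / 4) * ((fullEllipseCount (f k) (b k) (Real.sqrt E / Real.pi) : ℝ)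
          - (f k * b k / Real.pi) * E) with ht_def
  have htarget : ((1 / (4 * Real.pi)) *
            (∑ k ∈ Finset.range n, f k * b k) * E -
          (1 / (4 * Real.pi)) *
            (∑ k ∈ Finset.range n, 2 * (f k + b k)) *
              Real.sqrt E +
          ∑ k ∈ Finset.range n,
            (1 / 4) * ((fullEllipseCount (f k) (b k)
                (Real.sqrt E / Real.pi) : ℝ) -
              (f k * b k / Real.pi) * E))
      = ∑ k ∈ Finset.range n, t k := by
    have hV : (1 / (4 * Real.pi)) * (∑ k ∈ Finset.range n, f k * b k) * E
        = ∑ k ∈ Finset.range n, (1 / (4 * Real.pi)) * (f k * b k) * E := by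
      rw [Finset.mul_sum, Finset.sum_mul]
    have hL : (1 / (4 * Real.pi)) * (∑ k ∈ Finset.range n, 2 * (f k + b k)) * Real.sqrt E
        = ∑ k ∈ Finset.range n, (1 / (4 * Real.pi)) * (2 * (f k + b k)) * Real.sqrt E := by
      rw [Finset.mul_sum, Finset.sum_mul]
    rw [hV, hL, ← Finset.sum_sub_distrib, ← Finset.sum_add_distrib]
  rw [htsum, htarget, ← Finset.sum_sub_distrib]
  -- per-term bound
  have hperk : ∀ k ∈ Finset.range n,
      |(mixedCount (f k) (b k) E : ℝ) - t k| ≤ 1 + b k * R := by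
    intro k _
    have hak : 0 < f k := lt_of_lt_of_le hc (hf k)
    rw [mixedCount_eq_quarter (f k) (b k) E hak (hb k) hE0.le, ht_def]
    have hEs : Real.sqrt E = Real.pi * R := by
      rw [hR_def]; field_simp
    have h1 : (⌊f k * R⌋ : ℝ) ≤ f k * R := Int.floor_le _
    have h2 : f k * R - 1 < (⌊f k * R⌋ : ℝ) := Int.sub_one_lt_floor _
    have hbR : 0 ≤ b k * R := mul_nonneg (hb k).le hR.le
    have h3 : (0 : ℝ) ≤ (⌊b k * R⌋ : ℝ) := by
      exact_mod_cast Int.floor_nonneg.mpr hbR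
    have h4 : (⌊b k * R⌋ : ℝ) ≤ b k * R := Int.floor_le _
    have hEeq : E = Real.pi ^ 2 * R ^ 2 := by
      rw [hR_def, div_pow, Real.sq_sqrt hE0.le]; field_simp
    have hinner : ((fullEllipseCount (f k) (b k) (Real.sqrt E / Real.pi) : ℝ) / 4
        + (⌊b k * (Real.sqrt E / Real.pi)⌋ : ℝ) / 2
        - (⌊f k * (Real.sqrt E / Real.pi)⌋ : ℝ) / 2 - 1 / 4)
        - ((1 / (4 * Real.pi)) * (f k * b k) * E
          - (1 / (4 * Real.pi)) * (2 * (f k + b k)) * Real.sqrt E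
          + (1 / 4) * ((fullEllipseCount (f k) (b k) (Real.sqrt E / Real.pi) : ℝ)
              - (f k * b k / Real.pi) * E))
        = (⌊b k * R⌋ : ℝ) / 2 - (⌊f k * R⌋ : ℝ) / 2 - 1 / 4
          + (f k + b k) * R / 2 := by
      rw [← hR_def, hEs]
      field_simp
      ring
    rw [hinner, abs_le]
    constructor <;> nlinarith
  calc |∑ k ∈ Finset.range n,
        ((mixedCount (f k) (b k) E : ℝ) - t k)|
      ≤ ∑ k ∈ Finset.range n, |(mixedCount (f k) (b k) E : ℝ) - t k| :=
        Finset.abs_sum_le_sum_abs _ _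
    _ ≤ ∑ k ∈ Finset.range n, (1 + b k * R) := Finset.sum_le_sum hperk
    _ = (n : ℝ) + (∑ k ∈ Finset.range n, b k) * R := by
        rw [Finset.sum_add_distrib, Finset.sum_const, Finset.card_range,
          ← Finset.sum_mul]
        simp
    _ ≤ (2 * S / Real.pi + 1) * Real.sqrt E := by
        have hle : ∀ k ∈ Finset.range n, (1 : ℝ) ≤ b k * R := by
          intro k hk
          have hkK : k ∈ K := by
            rw [hKI]
            exact Set.mem_Iio.mpr (Finset.mem_range.mp hk)
          have hbk : Real.pi / Real.sqrt E ≤ b k := hkK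
          rw [div_le_iff₀ hsE0] at hbk
          rw [hR_def, ← mul_div_assoc, le_div_iff₀ hpi, one_mul]
          exact hbk
        have hnle : (n : ℝ) ≤ (∑ k ∈ Finset.range n, b k) * R := by
          calc (n : ℝ) = ∑ k ∈ Finset.range n, (1 : ℝ) := by simp
            _ ≤ ∑ k ∈ Finset.range n, b k * R := Finset.sum_le_sum hle
            _ = (∑ k ∈ Finset.range n, b k) * R := by rw [Finset.sum_mul]
        have hpartial : ∑ k ∈ Finset.range n, b k ≤ S :=
          Summable.sum_le_tsum (Finset.range n) (fun k _ => (hb k).le) hsum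
        have hsum_le : (∑ k ∈ Finset.range n, b k) * R ≤ S * R :=
          mul_le_mul_of_nonneg_right hpartial hR.le
        have hSR : S * R = S * Real.sqrt E / Real.pi := by
          rw [hR_def]; ring
        have : (n : ℝ) + (∑ k ∈ Finset.range n, b k) * R ≤ 2 * (S * R) := by
          linarith
        calc (n : ℝ) + (∑ k ∈ Finset.range n, b k) * R ≤ 2 * (S * R) := this
          _ = (2 * S / Real.pi) * Real.sqrt E := by rw [hR_def]; ring
          _ ≤ (2 * S / Real.pi + 1) * Real.sqrt E := by
              apply mul_le_mul_of_nonneg_right _ hsE0.le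
              linarith
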